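/- For a prime p, an integer a ≥ 1, and x ∈ [0,1), let A = [p^{-a}⌊p^a x⌋, p^{-a}⌊p^a x⌋ + p^{-a}). Then ∑_{k=0}^{p^a − 1} e^{2πi φ_p(k)(φ_p^+(x) − φ_p^+(t))} equals p^a if t ∈ A and 0 if t ∈ [0,1) \ A, where φ_p is the radical inverse (Monna) map and φ_p^+ its inverse (using finite expansions for p-adic rationals). -/

import Mathlib

/-- The `r`-th base-`p` digit of `x ∈ [0,1)` (finite expansion for `p`-adic rationals). -/
noncomputable def padDigit (p : ℕ) (x : ℝ) (r : ℕ) : ℕ := ⌊x * (p : ℝ) ^ (r + 1)⌋.toNat % p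

/-- The inverse Monna map `φ_p^+ : [0,1) → ℤ_p`, sending
`x = ∑ x_r p^{-(r+1)}` (finite expansion for `p`-adic rationals) to `∑ x_r p^r`. -/
noncomputable def phiPlus (p : ℕ) [Fact p.Prime] (x : ℝ) : ℤ_[p] :=
  ∑' r : ℕ, (padDigit p x r : ℤ_[p]) * (p : ℤ_[p]) ^ r

/-- The radical inverse function `φ_p : ℕ → [0,1)` in base `p`. -/
noncomputable def radInv (p : ℕ) (k : ℕ) : ℝ :=
  ∑ i ∈ Finset.range (Nat.log p k + 1), (k / p ^ i % p : ℕ) / (p : ℝ) ^ (i + 1)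

/-- The `p`-adic character `χ_k(z) = e^{2πi φ_p(k) z}`, where the product
`φ_p(k)·z` is taken modulo one: since `φ_p(k)` has denominator `p^a` with
`a = log_p k + 1`, only `z` modulo `p^a` (its approximation `z.appr a`) matters. -/
noncomputable def padChar (p : ℕ) [Fact p.Prime] (k : ℕ) (z : ℤ_[p]) : ℂ :=
  Complex.exp (2 * Real.pi * Complex.I *
    (radInv p k * (z.appr (Nat.log p k + 1) : ℝ)))

/-- The `p`-adic function `β_k(x) = χ_k(φ_p^+(x))`. -/
noncomputable def padBeta (p : ℕ) [Fact p.Prime] (k : ℕ) (x : ℝ) : ℂ :=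
  padChar p k (phiPlus p x)

/-- The Monna map `φ_p : ℤ_p → [0,1)`, sending `∑ z_r p^r` to `∑ z_r p^{-(r+1)} (mod 1)`. -/
noncomputable def monna (p : ℕ) [Fact p.Prime] (z : ℤ_[p]) : ℝ :=
  Int.fract (∑' r : ℕ, ((z.appr (r + 1) / p ^ r : ℕ) : ℝ) / (p : ℝ) ^ (r + 1))

/-- The `p`-adic shift `x ⊕_p σ = φ_p(φ_p^+(x) + φ_p^+(σ))`. -/
noncomputable def oplus (p : ℕ) [Fact p.Prime] (x σ : ℝ) : ℝ :=
  monna p (phiPlus p x + phiPlus p σ)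

/-- The inverse `p`-adic shift `x ⊖_p σ = φ_p(φ_p^+(x) - φ_p^+(σ))`. -/
noncomputable def ominus (p : ℕ) [Fact p.Prime] (x σ : ℝ) : ℝ :=
  monna p (phiPlus p x - phiPlus p σ)

namespace CharSumAux

/-- A digit sum with digits `< p` is `< p ^ a`. -/
lemma sum_digits_lt {p : ℕ} (hp : 1 < p) : ∀ (a : ℕ) (d : ℕ → ℕ), (∀ i < a, d i < p) →
    ∑ i ∈ Finset.range a, d i * p ^ i < p ^ a := by
  intro a
  induction a with
  | zero => intro d _; simpa using hp
  | succ a ih =>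
    intro d hd
    rw [Finset.sum_range_succ', pow_succ]
    have h1 : ∑ i ∈ Finset.range a, d (i + 1) * p ^ (i + 1)
        = (∑ i ∈ Finset.range a, d (i + 1) * p ^ i) * p := by
      rw [Finset.sum_mul]
      exact Finset.sum_congr rfl fun i _ => by ring
    have h2 := ih (fun i => d (i + 1)) (fun i hi => hd (i + 1) (by omega))
    have h3 : d 0 < p := hd 0 (by omega)
    have h4 : (∑ i ∈ Finset.range a, d (i + 1) * p ^ i + 1) * p ≤ p ^ a * p :=
      Nat.mul_le_mul_right p h2
    rw [add_mul, one_mul] at h4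
    simp only [pow_zero, mul_one]
    omega

/-- Uniqueness of base-`p` digit expansions. -/
lemma digits_unique {p : ℕ} (hp : 1 < p) : ∀ (a : ℕ) (d e : ℕ → ℕ),
    (∀ i < a, d i < p) → (∀ i < a, e i < p) →
    (∑ i ∈ Finset.range a, d i * p ^ i = ∑ i ∈ Finset.range a, e i * p ^ i) →
    ∀ i < a, d i = e i := by
  intro a
  induction a with
  | zero => intro d e _ _ _ i hi; omega
  | succ a ih =>
    intro d e hd he h i hi
    rw [Finset.sum_range_succ', Finset.sum_range_succ'] at h
    have hfac : ∀ f : ℕ → ℕ, ∑ i ∈ Finset.range a, f (i + 1) * p ^ (i + 1)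
        = (∑ i ∈ Finset.range a, f (i + 1) * p ^ i) * p := by
      intro f
      rw [Finset.sum_mul]
      exact Finset.sum_congr rfl fun i _ => by ring
    rw [hfac d, hfac e] at h
    simp only [pow_zero, mul_one] at h
    have hd0 : d 0 < p := hd 0 (by omega)
    have he0 : e 0 < p := he 0 (by omega)
    have hmod : d 0 = e 0 := by
      have := congrArg (· % p) h
      simpa [Nat.add_mul_mod_self_left, Nat.mul_mod_left, Nat.add_comm,
        Nat.add_mul_mod_self_right, Nat.mod_eq_of_lt hd0, Nat.mod_eq_of_lt he0] using this
    have hS : ∑ i ∈ Finset.range a, d (i + 1) * p ^ i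
        = ∑ i ∈ Finset.range a, e (i + 1) * p ^ i := by
      have hp0 : 0 < p := by omega
      have : (∑ i ∈ Finset.range a, d (i + 1) * p ^ i) * p
          = (∑ i ∈ Finset.range a, e (i + 1) * p ^ i) * p := by omega
      exact Nat.eq_of_mul_eq_mul_right hp0 this
    rcases i with _ | j
    · exact hmod
    · exact ih (fun i => d (i + 1)) (fun i => e (i + 1))
        (fun i hi => hd (i + 1) (by omega)) (fun i hi => he (i + 1) (by omega)) hS j (by omega)

/-- Reconstruction of `k < p ^ a` from its digits. -/
lemma sum_div_mod {p : ℕ} (hp : 1 < p) : ∀ (a k : ℕ), k < p ^ a →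
    ∑ i ∈ Finset.range a, k / p ^ i % p * p ^ i = k := by
  intro a
  induction a with
  | zero => intro k hk; simp at hk ⊢; omega
  | succ a ih =>
    intro k hk
    rw [Finset.sum_range_succ']
    have hterm : ∀ i, k / p ^ (i + 1) % p * p ^ (i + 1)
        = (k / p / p ^ i % p * p ^ i) * p := by
      intro i
      have h1 : k / p ^ (i + 1) = k / p / p ^ i := by
        rw [Nat.div_div_eq_div_mul, pow_succ']
      rw [h1, pow_succ]
      ring
    simp only [hterm, ← Finset.sum_mul]
    have hkp : k / p < p ^ a := by
      rw [Nat.div_lt_iff_lt_mul (by omega)]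
      calc k < p ^ (a + 1) := hk
        _ = p ^ a * p := pow_succ p a
    rw [ih (k / p) hkp]
    simp only [pow_zero, mul_one, Nat.div_one]
    exact Nat.div_add_mod' k p

/-- The digit reversal map on `a` base-`p` digits. -/
def rev (p a k : ℕ) : ℕ := ∑ i ∈ Finset.range a, k / p ^ i % p * p ^ (a - 1 - i)

lemma rev_eq_reflect (p a k : ℕ) :
    rev p a k = ∑ j ∈ Finset.range a, k / p ^ (a - 1 - j) % p * p ^ j := by
  rw [rev, ← Finset.sum_range_reflect]
  refine Finset.sum_congr rfl fun j hj => ?_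
  simp only [Finset.mem_range] at hj
  congr 2
  omega

lemma rev_lt {p : ℕ} (hp : 1 < p) (a k : ℕ) : rev p a k < p ^ a := by
  rw [rev_eq_reflect]
  exact sum_digits_lt hp a _ (fun i _ => Nat.mod_lt _ (by omega))

lemma rev_injOn {p : ℕ} (hp : 1 < p) {a k k' : ℕ} (hk : k < p ^ a) (hk' : k' < p ^ a)
    (h : rev p a k = rev p a k') : k = k' := by
  rw [rev_eq_reflect, rev_eq_reflect] at h
  have hdig := digits_unique hp a _ _ (fun i _ => Nat.mod_lt _ (by omega))
    (fun i _ => Nat.mod_lt _ (by omega)) h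
  have hall : ∀ i < a, k / p ^ i % p = k' / p ^ i % p := by
    intro i hi
    have := hdig (a - 1 - i) (by omega)
    have hrw : a - 1 - (a - 1 - i) = i := by omega
    rwa [hrw] at this
  calc k = ∑ i ∈ Finset.range a, k / p ^ i % p * p ^ i := (sum_div_mod hp a k hk).symm
    _ = ∑ i ∈ Finset.range a, k' / p ^ i % p * p ^ i :=
        Finset.sum_congr rfl fun i hi => by rw [hall i (Finset.mem_range.mp hi)]
    _ = k' := sum_div_mod hp a k' hk'

lemma rev_image {p : ℕ} (hp : 1 < p) (a : ℕ) :
    (Finset.range (p ^ a)).image (rev p a) = Finset.range (p ^ a) := by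
  apply Finset.eq_of_subset_of_card_le
  · intro j hj
    simp only [Finset.mem_image, Finset.mem_range] at hj ⊢
    obtain ⟨k, _, rfl⟩ := hj
    exact rev_lt hp a k
  · rw [Finset.card_image_of_injOn, Finset.card_range]
    intro k hk k' hk' h
    exact rev_injOn hp (Finset.mem_range.mp hk) (Finset.mem_range.mp hk') h

lemma sum_rev {p : ℕ} (hp : 1 < p) (a : ℕ) (f : ℕ → ℂ) :
    ∑ k ∈ Finset.range (p ^ a), f (rev p a k) = ∑ j ∈ Finset.range (p ^ a), f j := by
  have hinj : ∀ k ∈ Finset.range (p ^ a), ∀ k' ∈ Finset.range (p ^ a),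
      rev p a k = rev p a k' → k = k' := fun k hk k' hk' h =>
    rev_injOn hp (Finset.mem_range.mp hk) (Finset.mem_range.mp hk') h
  conv_rhs => rw [← rev_image hp a]
  rw [Finset.sum_image hinj]

lemma rev_scale {p : ℕ} (hp : 1 < p) {L a k : ℕ} (hkL : k < p ^ L) (hLa : L ≤ a) :
    rev p a k = p ^ (a - L) * rev p L k := by
  rw [rev, rev, Finset.mul_sum]
  rw [← Finset.sum_subset (Finset.range_subset_range.mpr hLa)
    (f := fun i => k / p ^ i % p * p ^ (a - 1 - i))]
  · refine Finset.sum_congr rfl fun i hi => ?_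
    simp only [Finset.mem_range] at hi
    have : p ^ (a - 1 - i) = p ^ (a - L) * p ^ (L - 1 - i) := by
      rw [← pow_add]; congr 1; omega
    rw [this]; ring
  · intro i _ hi
    simp only [Finset.mem_range, not_lt] at hi
    have : k < p ^ i := lt_of_lt_of_le hkL (Nat.pow_le_pow_right (by omega) hi)
    rw [Nat.div_eq_of_lt this]
    simp

lemma radInv_eq {p : ℕ} (hp : 1 < p) {a k : ℕ} (ha : 1 ≤ a) (hk : k < p ^ a) :
    radInv p k = (rev p a k : ℝ) / (p : ℝ) ^ a := by
  have hp0 : (0 : ℝ) < p := by exact_mod_cast Nat.lt_of_lt_of_le Nat.zero_lt_one hp.le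
  set L := Nat.log p k + 1 with hL
  have hLa : L ≤ a := by
    rcases Nat.eq_zero_or_pos k with rfl | hk0
    · simp [hL, Nat.log_zero_right]; omega
    · have := Nat.log_lt_of_lt_pow (by omega : k ≠ 0) hk
      omega
  have hkL : k < p ^ L := Nat.lt_pow_succ_log_self hp k
  have hrev : rev p a k = p ^ (a - L) * rev p L k := rev_scale hp hkL hLa
  have hpa : (p : ℝ) ^ a = (p : ℝ) ^ (a - L) * (p : ℝ) ^ L := by
    have hadd : a - L + L = a := by omega
    rw [← pow_add, hadd]
  have step1 : (rev p a k : ℝ) / (p : ℝ) ^ a = (rev p L k : ℝ) / (p : ℝ) ^ L := by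
    rw [hrev, hpa]
    push_cast
    rw [mul_comm ((p : ℝ) ^ (a - L)) ((rev p L k : ℝ)),
      mul_comm ((p : ℝ) ^ (a - L)) ((p : ℝ) ^ L), mul_div_mul_right _ _ (by positivity)]
  rw [step1, radInv, ← hL, rev]
  push_cast
  rw [Finset.sum_div]
  refine Finset.sum_congr rfl fun i hi => ?_
  simp only [Finset.mem_range] at hi
  have hpL : (p : ℝ) ^ L = (p : ℝ) ^ (i + 1) * (p : ℝ) ^ (L - 1 - i) := by
    rw [← pow_add]; congr 1; omega
  rw [hpL, mul_div_mul_right _ _ (by positivity : ((p:ℝ) ^ (L - 1 - i)) ≠ 0)]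

lemma alg_key {P R A C Q : ℝ} (hQ : Q ≠ 0) (hP : P ≠ 0) :
    (P * R) * (A + Q * C) / (P * Q) = R / Q * A + R * C := by
  field_simp

lemma exp_two_pi_eq {θ₁ θ₂ : ℂ} (n : ℤ) (h : θ₂ = θ₁ + n) :
    Complex.exp (2 * Real.pi * Complex.I * θ₂)
      = Complex.exp (2 * Real.pi * Complex.I * θ₁) := by
  subst h
  rw [mul_add, Complex.exp_add]
  have h1 : Complex.exp (2 * Real.pi * Complex.I * n) = 1 := by
    rw [mul_comm]; exact Complex.exp_int_mul_two_pi_mul_I n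
  rw [h1, mul_one]

set_option maxHeartbeats 4000000 in
lemma padChar_eq_exp {p : ℕ} [hpp : Fact p.Prime] {a k : ℕ} (ha : 1 ≤ a) (hk : k < p ^ a)
    (z : ℤ_[p]) :
    padChar p k z = Complex.exp (2 * Real.pi * Complex.I *
      ((rev p a k : ℝ) * (z.appr a : ℝ) / (p : ℝ) ^ a)) := by
  have hp : 1 < p := hpp.out.one_lt
  have hp0 : (0 : ℝ) < p := by exact_mod_cast Nat.lt_of_lt_of_le Nat.zero_lt_one hp.le
  simp only [padChar]
  have hkL : k < p ^ (Nat.log p k + 1) := Nat.lt_pow_succ_log_self hp k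
  have hLa : Nat.log p k + 1 ≤ a := by
    rcases Nat.eq_zero_or_pos k with rfl | hk0
    · simp [Nat.log_zero_right]; omega
    · have := Nat.log_lt_of_lt_pow (by omega : k ≠ 0) hk
      omega
  have hL1 : 1 ≤ Nat.log p k + 1 := by omega
  generalize hLdef : Nat.log p k + 1 = L at hkL hLa hL1 ⊢
  have hmono : z.appr L ≤ z.appr a := z.appr_mono hLa
  obtain ⟨c, hc⟩ := z.dvd_appr_sub_appr L a hLa
  have happr : z.appr a = z.appr L + p ^ L * c := by omega
  have hrev : rev p a k = p ^ (a - L) * rev p L k := rev_scale hp hkL hLa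
  have hradInv : radInv p k = (rev p L k : ℝ) / (p : ℝ) ^ L := radInv_eq hp hL1 hkL
  have hpa : (p : ℝ) ^ a = (p : ℝ) ^ (a - L) * (p : ℝ) ^ L := by
    have hadd : a - L + L = a := by omega
    rw [← pow_add, hadd]
  have hrevR : ((rev p a k : ℕ) : ℝ) = (p : ℝ) ^ (a - L) * ((rev p L k : ℕ) : ℝ) := by
    rw [hrev]; push_cast; ring
  have happrR : ((z.appr a : ℕ) : ℝ) = ((z.appr L : ℕ) : ℝ) + (p : ℝ) ^ L * (c : ℝ) := by
    rw [happr]; push_cast; ring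
  have key : (rev p a k : ℝ) * (z.appr a : ℝ) / (p : ℝ) ^ a
      = radInv p k * (z.appr L : ℝ) + (((rev p L k : ℤ) * c : ℤ) : ℝ) := by
    rw [hrevR, happrR, hradInv, hpa]
    have hnR : ((((rev p L k : ℤ) * c : ℤ)) : ℝ) = ((rev p L k : ℕ) : ℝ) * (c : ℝ) := by
      push_cast; ring
    rw [hnR]
    exact alg_key (by positivity) (by positivity)
  refine (exp_two_pi_eq ((rev p L k : ℤ) * c) ?_).symm
  exact_mod_cast congrArg (Complex.ofReal) key

lemma sum_exp_eq {n : ℕ} (hn : 0 < n) {m : ℕ} (hm : m < n) :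
    ∑ j ∈ Finset.range n, Complex.exp (2 * Real.pi * Complex.I * ((j : ℝ) * (m : ℝ) / (n : ℝ)))
      = if m = 0 then (n : ℂ) else 0 := by
  have hn0 : (n : ℝ) ≠ 0 := by positivity
  split_ifs with h
  · subst h
    simp
  · set ζ : ℂ := Complex.exp (2 * Real.pi * Complex.I * ((m : ℝ) / (n : ℝ))) with hζ
    have hterm : ∀ j : ℕ, Complex.exp (2 * Real.pi * Complex.I * ((j : ℝ) * (m : ℝ) / (n : ℝ)))
        = ζ ^ j := by
      intro j
      rw [hζ, ← Complex.exp_nat_mul]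
      congr 1
      push_cast
      ring
    simp only [hterm]
    have hζn : ζ ^ n = 1 := by
      rw [hζ, ← Complex.exp_nat_mul]
      have hnc : (n : ℂ) ≠ 0 := Nat.cast_ne_zero.mpr (by omega)
      have heq : (n : ℂ) * (2 * Real.pi * Complex.I * (((m : ℝ) : ℂ) / ((n : ℝ) : ℂ)))
          = (m : ℕ) * (2 * Real.pi * Complex.I) := by
        push_cast
        field_simp
      rw [heq]
      exact Complex.exp_nat_mul_two_pi_mul_I m
    have hζ1 : ζ ≠ 1 := by
      rw [hζ, Ne, Complex.exp_eq_one_iff]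
      rintro ⟨k, hk⟩
      have h2πI : (2 * (Real.pi : ℂ) * Complex.I) ≠ 0 := by
        simp [Real.pi_ne_zero, Complex.I_ne_zero]
      rw [mul_comm ((k : ℂ)) _] at hk
      have heq : (((m : ℝ) / (n : ℝ) : ℝ) : ℂ) = ((k : ℝ) : ℂ) := by
        have := mul_left_cancel₀ h2πI hk
        push_cast at this ⊢
        exact this
      have heqr : (m : ℝ) / (n : ℝ) = (k : ℝ) := by exact_mod_cast heq
      have h0 : (0 : ℝ) < (m : ℝ) / (n : ℝ) := by
        apply div_pos
        · exact_mod_cast Nat.pos_of_ne_zero h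
        · exact_mod_cast hn
      have h1 : (m : ℝ) / (n : ℝ) < 1 := by
        rw [div_lt_one (by exact_mod_cast hn)]
        exact_mod_cast hm
      rw [heqr] at h0 h1
      have hk0 : (0 : ℤ) < k := by exact_mod_cast h0
      have hk1 : k < 1 := by exact_mod_cast h1
      omega
    rw [geom_sum_eq hζ1, hζn]
    simp

lemma summable_digit_series {p : ℕ} [hpp : Fact p.Prime] (c : ℕ → ℕ) :
    Summable (fun r => (c r : ℤ_[p]) * (p : ℤ_[p]) ^ r) := by
  have hp : 1 < p := hpp.out.one_lt
  have hp0 : (0 : ℝ) < p := by exact_mod_cast Nat.lt_of_lt_of_le Nat.zero_lt_one hp.le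
  apply Summable.of_norm_bounded (g := fun r => ((p : ℝ)⁻¹) ^ r)
  · exact summable_geometric_of_lt_one (by positivity)
      (inv_lt_one_of_one_lt₀ (by exact_mod_cast hp))
  · intro r
    calc ‖(c r : ℤ_[p]) * (p : ℤ_[p]) ^ r‖
        ≤ ‖(c r : ℤ_[p])‖ * ‖(p : ℤ_[p]) ^ r‖ := norm_mul_le _ _
      _ ≤ 1 * ‖(p : ℤ_[p]) ^ r‖ := by
          apply mul_le_mul_of_nonneg_right (PadicInt.norm_le_one _) (norm_nonneg _)
      _ = ‖(p : ℤ_[p]) ^ r‖ := one_mul _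
      _ = ((p : ℝ))⁻¹ ^ r := by
          rw [PadicInt.norm_p_pow]
          rw [zpow_neg, zpow_natCast, inv_pow]

lemma phiPlus_decomp {p : ℕ} [hpp : Fact p.Prime] (x : ℝ) (a : ℕ) :
    ∃ w : ℤ_[p], phiPlus p x
      = (∑ r ∈ Finset.range a, (padDigit p x r : ℤ_[p]) * (p : ℤ_[p]) ^ r)
        + (p : ℤ_[p]) ^ a * w := by
  have hsum : Summable (fun r => (padDigit p x r : ℤ_[p]) * (p : ℤ_[p]) ^ r) :=
    summable_digit_series _
  have hsum2 : Summable (fun r => (padDigit p x (r + a) : ℤ_[p]) * (p : ℤ_[p]) ^ r) :=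
    summable_digit_series _
  refine ⟨∑' r, (padDigit p x (r + a) : ℤ_[p]) * (p : ℤ_[p]) ^ r, ?_⟩
  rw [phiPlus, ← hsum.sum_add_tsum_nat_add a]
  congr 1
  have : ∀ r : ℕ, (padDigit p x (r + a) : ℤ_[p]) * (p : ℤ_[p]) ^ (r + a)
      = ((padDigit p x (r + a) : ℤ_[p]) * (p : ℤ_[p]) ^ r) * (p : ℤ_[p]) ^ a := by
    intro r; rw [pow_add]; ring
  rw [tsum_congr this, hsum2.tsum_mul_right]
  ring

lemma appr_eq_zero_iff {p : ℕ} [hpp : Fact p.Prime] (z : ℤ_[p]) (a : ℕ) :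
    z.appr a = 0 ↔ z ∈ Ideal.span {(p : ℤ_[p]) ^ a} := by
  constructor
  · intro h
    have := z.appr_spec a
    rwa [h, Nat.cast_zero, sub_zero] at this
  · intro h
    have h2 := z.appr_spec a
    have h3 : ((z.appr a : ℤ_[p])) ∈ Ideal.span {(p : ℤ_[p]) ^ a} := by
      have heq : (z.appr a : ℤ_[p]) = z - (z - (z.appr a : ℤ_[p])) := by ring
      rw [heq]
      exact Ideal.sub_mem _ h h2
    rw [← PadicInt.norm_le_pow_iff_mem_span_pow] at h3
    have h4 : ((p : ℤ) ^ a) ∣ (z.appr a : ℤ) := by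
      rw [← PadicInt.norm_int_le_pow_iff_dvd]
      have : (((z.appr a : ℤ) : ℤ_[p])) = ((z.appr a : ℕ) : ℤ_[p]) := by push_cast; ring
      rwa [this]
    have h5 : p ^ a ∣ z.appr a := by exact_mod_cast h4
    exact Nat.eq_zero_of_dvd_of_lt h5 (z.appr_lt a)

lemma floor_succ {p : ℕ} (hp : 1 < p) {x : ℝ} (hx : 0 ≤ x) (r : ℕ) :
    ⌊x * (p : ℝ) ^ (r + 1)⌋.toNat = p * ⌊x * (p : ℝ) ^ r⌋.toNat + padDigit p x r := by
  have hp0 : (0 : ℝ) < p := by exact_mod_cast Nat.lt_of_lt_of_le Nat.zero_lt_one hp.le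
  have hnn : (0 : ℝ) ≤ x * (p : ℝ) ^ r := by positivity
  have hnn1 : (0 : ℝ) ≤ x * (p : ℝ) ^ (r + 1) := by positivity
  have hf0 : (0 : ℤ) ≤ ⌊x * (p : ℝ) ^ r⌋ := Int.floor_nonneg.2 hnn
  have hf1 : (0 : ℤ) ≤ ⌊x * (p : ℝ) ^ (r + 1)⌋ := Int.floor_nonneg.2 hnn1
  have hle : (p : ℤ) * ⌊x * (p : ℝ) ^ r⌋ ≤ ⌊x * (p : ℝ) ^ (r + 1)⌋ := by
    rw [Int.le_floor]
    push_cast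
    calc ((p : ℝ)) * (⌊x * (p : ℝ) ^ r⌋ : ℝ) ≤ (p : ℝ) * (x * (p : ℝ) ^ r) :=
          mul_le_mul_of_nonneg_left (Int.floor_le _) hp0.le
      _ = x * (p : ℝ) ^ (r + 1) := by ring
  have hlt : ⌊x * (p : ℝ) ^ (r + 1)⌋ < (p : ℤ) * ⌊x * (p : ℝ) ^ r⌋ + p := by
    rw [Int.floor_lt]
    push_cast
    calc x * (p : ℝ) ^ (r + 1) = (p : ℝ) * (x * (p : ℝ) ^ r) := by ring
      _ < (p : ℝ) * ((⌊x * (p : ℝ) ^ r⌋ : ℝ) + 1) :=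
          mul_lt_mul_of_pos_left (Int.lt_floor_add_one _) hp0
      _ = (p : ℝ) * (⌊x * (p : ℝ) ^ r⌋ : ℝ) + p := by ring
  set n := ⌊x * (p : ℝ) ^ r⌋.toNat with hn
  set N := ⌊x * (p : ℝ) ^ (r + 1)⌋.toNat with hN
  have h1 : (N : ℤ) = ⌊x * (p : ℝ) ^ (r + 1)⌋ := Int.toNat_of_nonneg hf1
  have h2 : (n : ℤ) = ⌊x * (p : ℝ) ^ r⌋ := Int.toNat_of_nonneg hf0
  have hle' : n * p ≤ N := by
    have h3 : (n : ℤ) * (p : ℤ) ≤ (N : ℤ) := by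
      rw [h1, h2, mul_comm (⌊x * (p : ℝ) ^ r⌋) ((p : ℤ))]
      exact hle
    exact_mod_cast h3
  have hlt' : N < n * p + p := by
    have h3 : (N : ℤ) < (n : ℤ) * (p : ℤ) + (p : ℤ) := by
      rw [h1, h2, mul_comm (⌊x * (p : ℝ) ^ r⌋) ((p : ℤ))]
      exact hlt
    exact_mod_cast h3
  have hdiv : N / p = n := Nat.div_eq_of_lt_le hle' (by rw [Nat.succ_mul]; omega)
  have hmod : padDigit p x r = N % p := rfl
  rw [hmod, ← hdiv]
  exact (Nat.div_add_mod N p).symm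

lemma floor_eq_digit_sum {p : ℕ} (hp : 1 < p) {x : ℝ} (hx0 : 0 ≤ x) (hx1 : x < 1) (a : ℕ) :
    ⌊x * (p : ℝ) ^ a⌋.toNat = ∑ r ∈ Finset.range a, padDigit p x r * p ^ (a - 1 - r) := by
  induction a with
  | zero =>
    simp only [pow_zero, mul_one, Finset.range_zero, Finset.sum_empty]
    rw [Int.floor_eq_zero_iff.mpr ⟨hx0, hx1⟩]
    rfl
  | succ a ih =>
    rw [floor_succ hp hx0 a, ih, Finset.sum_range_succ]
    have hlast : a + 1 - 1 - a = 0 := by omega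
    rw [hlast, pow_zero, mul_one, Finset.mul_sum]
    congr 1
    refine Finset.sum_congr rfl fun r hr => ?_
    simp only [Finset.mem_range] at hr
    have : p * p ^ (a - 1 - r) = p ^ (a + 1 - 1 - r) := by
      rw [← pow_succ']
      congr 1
      omega
    rw [← mul_assoc, mul_comm p (padDigit p x r), mul_assoc, this]

end CharSumAux

open CharSumAux in
theorem char_sum_indicator (p : ℕ) [hp : Fact p.Prime] (a : ℕ) (ha : 1 ≤ a)
    (x t : ℝ) (hx : x ∈ Set.Ico (0:ℝ) 1) (ht : t ∈ Set.Ico (0:ℝ) 1) :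
    ∑ k ∈ Finset.range (p ^ a), padChar p k (phiPlus p x - phiPlus p t)
      = if t ∈ Set.Ico ((⌊(p : ℝ) ^ a * x⌋ : ℝ) / (p : ℝ) ^ a)
              ((⌊(p : ℝ) ^ a * x⌋ : ℝ) / (p : ℝ) ^ a + 1 / (p : ℝ) ^ a)
        then ((p : ℂ) ^ a) else 0 := by
  have hp1 : 1 < p := hp.out.one_lt
  have hp0 : (0 : ℝ) < p := by exact_mod_cast Nat.lt_of_lt_of_le Nat.zero_lt_one hp1.le
  have hpa0 : (0 : ℝ) < (p : ℝ) ^ a := by positivity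
  have hpan : 0 < p ^ a := Nat.pow_pos (by omega)
  set z : ℤ_[p] := phiPlus p x - phiPlus p t with hz
  have hmlt : z.appr a < p ^ a := z.appr_lt a
  -- Step 1: rewrite the sum
  have hstep1 : ∑ k ∈ Finset.range (p ^ a), padChar p k z
      = ∑ j ∈ Finset.range (p ^ a),
          Complex.exp (2 * Real.pi * Complex.I *
            ((j : ℝ) * (z.appr a : ℝ) / ((p ^ a : ℕ) : ℝ))) := by
    rw [← sum_rev hp1 a
      (fun j => Complex.exp (2 * Real.pi * Complex.I *
        ((j : ℝ) * (z.appr a : ℝ) / ((p ^ a : ℕ) : ℝ))))]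
    refine Finset.sum_congr rfl fun k hk => ?_
    rw [padChar_eq_exp ha (Finset.mem_range.mp hk) z]
    congr 1
    push_cast
    ring
  have hgeom := sum_exp_eq (n := p ^ a) hpan hmlt
  rw [hstep1, hgeom]
  -- Step 2: relate the condition `m = 0` to the interval condition
  have hSx := CharSumAux.phiPlus_decomp (p := p) x a
  have hSt := CharSumAux.phiPlus_decomp (p := p) t a
  obtain ⟨wx, hwx⟩ := hSx
  obtain ⟨wt, hwt⟩ := hSt
  set Sx : ℕ := ∑ r ∈ Finset.range a, padDigit p x r * p ^ r with hSxdef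
  set St : ℕ := ∑ r ∈ Finset.range a, padDigit p t r * p ^ r with hStdef
  have hSxlt : Sx < p ^ a := sum_digits_lt hp1 a _ (fun i _ => Nat.mod_lt _ (by omega))
  have hStlt : St < p ^ a := sum_digits_lt hp1 a _ (fun i _ => Nat.mod_lt _ (by omega))
  have hsumcast : ∀ (u : ℝ), (∑ r ∈ Finset.range a, (padDigit p u r : ℤ_[p]) * (p : ℤ_[p]) ^ r)
      = ((∑ r ∈ Finset.range a, padDigit p u r * p ^ r : ℕ) : ℤ_[p]) := by
    intro u; push_cast; ring_nf
  set D : ℤ := (Sx : ℤ) - (St : ℤ) with hD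
  have hzdecomp : z = ((D : ℤ_[p])) + (p : ℤ_[p]) ^ a * (wx - wt) := by
    rw [hz, hwx, hwt, hsumcast, hsumcast, ← hSxdef, ← hStdef, hD]
    push_cast
    ring
  have hcond : z.appr a = 0 ↔ Sx = St := by
    rw [appr_eq_zero_iff]
    constructor
    · intro h
      have h2 : ((D : ℤ_[p])) ∈ Ideal.span {(p : ℤ_[p]) ^ a} := by
        have heq : ((D : ℤ_[p])) = z - (p : ℤ_[p]) ^ a * (wx - wt) := by
          rw [hzdecomp]; ring
        rw [heq]
        exact Ideal.sub_mem _ h (Ideal.mul_mem_right _ _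
          (Ideal.subset_span (Set.mem_singleton _)))
      rw [← PadicInt.norm_le_pow_iff_mem_span_pow, PadicInt.norm_int_le_pow_iff_dvd] at h2
      have h1 : (Sx : ℤ) < (p : ℤ) ^ a := by exact_mod_cast hSxlt
      have h2' : (St : ℤ) < (p : ℤ) ^ a := by exact_mod_cast hStlt
      have h3 : (0 : ℤ) ≤ (Sx : ℤ) := Int.natCast_nonneg _
      have h4 : (0 : ℤ) ≤ (St : ℤ) := Int.natCast_nonneg _
      have habs : |D| < (p : ℤ) ^ a := by
        rw [hD, abs_sub_lt_iff]
        constructor <;> linarith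
      have hD0 := Int.eq_zero_of_abs_lt_dvd h2 habs
      rw [hD, sub_eq_zero] at hD0
      exact_mod_cast hD0
    · intro h
      have hD0 : D = 0 := by rw [hD, h]; ring
      rw [hzdecomp, hD0]
      simp only [Int.cast_zero, zero_add]
      exact Ideal.mul_mem_right _ _ (Ideal.subset_span (Set.mem_singleton _))
  -- floors
  have hfloorx : ⌊x * (p : ℝ) ^ a⌋.toNat
      = ∑ r ∈ Finset.range a, padDigit p x r * p ^ (a - 1 - r) :=
    floor_eq_digit_sum hp1 hx.1 hx.2 a
  have hfloort : ⌊t * (p : ℝ) ^ a⌋.toNat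
      = ∑ r ∈ Finset.range a, padDigit p t r * p ^ (a - 1 - r) :=
    floor_eq_digit_sum hp1 ht.1 ht.2 a
  have reflect_sum : ∀ (d : ℕ → ℕ),
      ∑ r ∈ Finset.range a, d r * p ^ (a - 1 - r)
        = ∑ j ∈ Finset.range a, d (a - 1 - j) * p ^ j := by
    intro d
    rw [← Finset.sum_range_reflect]
    refine Finset.sum_congr rfl fun j hj => ?_
    simp only [Finset.mem_range] at hj
    have hj' : a - 1 - (a - 1 - j) = j := by omega
    rw [hj']
  have hcond2 : Sx = St ↔ ⌊x * (p : ℝ) ^ a⌋.toNat = ⌊t * (p : ℝ) ^ a⌋.toNat := by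
    constructor
    · intro h
      have hd : ∀ r < a, padDigit p x r = padDigit p t r :=
        digits_unique hp1 a _ _ (fun i _ => Nat.mod_lt _ (by omega))
          (fun i _ => Nat.mod_lt _ (by omega)) h
      rw [hfloorx, hfloort]
      exact Finset.sum_congr rfl fun r hr => by
        rw [hd r (Finset.mem_range.mp hr)]
    · intro h
      rw [hfloorx, hfloort, reflect_sum, reflect_sum] at h
      have hd' := digits_unique hp1 a (fun j => padDigit p x (a - 1 - j))
        (fun j => padDigit p t (a - 1 - j))
        (fun i _ => Nat.mod_lt _ (by omega)) (fun i _ => Nat.mod_lt _ (by omega)) h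
      have hd : ∀ r < a, padDigit p x r = padDigit p t r := by
        intro r hr
        have h5 := hd' (a - 1 - r) (by omega)
        have hrw : a - 1 - (a - 1 - r) = r := by omega
        rwa [hrw] at h5
      exact Finset.sum_congr rfl fun r hr => by
        rw [hd r (Finset.mem_range.mp hr)]
  -- interval condition
  have hfxnn : (0 : ℤ) ≤ ⌊x * (p : ℝ) ^ a⌋ :=
    Int.floor_nonneg.2 (mul_nonneg hx.1 hpa0.le)
  have hftnn : (0 : ℤ) ≤ ⌊t * (p : ℝ) ^ a⌋ :=
    Int.floor_nonneg.2 (mul_nonneg ht.1 hpa0.le)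
  have hcond3 : ⌊x * (p : ℝ) ^ a⌋.toNat = ⌊t * (p : ℝ) ^ a⌋.toNat
      ↔ ⌊x * (p : ℝ) ^ a⌋ = ⌊t * (p : ℝ) ^ a⌋ := by
    constructor
    · intro h
      rw [← Int.toNat_of_nonneg hfxnn, ← Int.toNat_of_nonneg hftnn, h]
    · intro h
      rw [h]
  have hcomm : ⌊(p : ℝ) ^ a * x⌋ = ⌊x * (p : ℝ) ^ a⌋ := by rw [mul_comm]
  have hcond4 : t ∈ Set.Ico ((⌊(p : ℝ) ^ a * x⌋ : ℝ) / (p : ℝ) ^ a)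
      ((⌊(p : ℝ) ^ a * x⌋ : ℝ) / (p : ℝ) ^ a + 1 / (p : ℝ) ^ a)
      ↔ ⌊t * (p : ℝ) ^ a⌋ = ⌊x * (p : ℝ) ^ a⌋ := by
    rw [hcomm, Int.floor_eq_iff, Set.mem_Ico]
    constructor
    · rintro ⟨h1, h2⟩
      constructor
      · rwa [div_le_iff₀ hpa0] at h1
      · rw [← add_div] at h2
        rwa [lt_div_iff₀ hpa0] at h2
    · rintro ⟨h1, h2⟩
      constructor
      · rwa [div_le_iff₀ hpa0]
      · rw [← add_div]
        rwa [lt_div_iff₀ hpa0]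
  have hfinal : (t ∈ Set.Ico ((⌊(p : ℝ) ^ a * x⌋ : ℝ) / (p : ℝ) ^ a)
      ((⌊(p : ℝ) ^ a * x⌋ : ℝ) / (p : ℝ) ^ a + 1 / (p : ℝ) ^ a)) ↔ z.appr a = 0 := by
    rw [hcond4, hcond, hcond2, hcond3]
    exact ⟨fun h => h.symm, fun h => h.symm⟩
  rw [if_congr hfinal.symm rfl rfl]
  split_ifs with h
  · push_cast
    ring
  · rfl
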